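/- arXiv:1810.13174 — 2 statements merged into one kernel-verified Lean document; each statement's English description precedes it below -/
import Mathlib

section
/- For every Fourier frequency k with ω/Cp < k < ω/Cs (where admissibility k² ± λ₁λ₂ ≠ 0 holds), there exists δ₀ > 0 such that for all overlaps δ with 0 < δ < δ₀, the convergence factor of the classical Schwarz method satisfies ρ_cla(k, ω, Cp, Cs, δ) > 1; i.e., the overlapping classical Schwarz method applied to the time-harmonic Navier equations diverges on the intermediate frequencies. -/
open Complex Filter Topology

/-- The convergence factor `ρ_cla(k, ω, Cp, Cs, δ) = max(|r₊|, |r₋|)` of the classical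
Schwarz method for the time-harmonic Navier equations, where
`r± = X²/2 + e^{−δ(λ₁+λ₂)} ± (1/2)√(X²(X² + 4e^{−δ(λ₁+λ₂)}))`,
`X = ((k² + λ₁λ₂)/(k² − λ₁λ₂))(e^{−λ₁δ} − e^{−λ₂δ})`,
`λ₁ = √(k² − ω²/Cs²)`, `λ₂ = √(k² − ω²/Cp²)` (principal complex square roots). -/
noncomputable def rhoCla (Cp Cs ω k δ : ℝ) : ℝ :=
  let l1 : ℂ := ((k ^ 2 - ω ^ 2 / Cs ^ 2 : ℝ) : ℂ) ^ (1 / 2 : ℂ)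
  let l2 : ℂ := ((k ^ 2 - ω ^ 2 / Cp ^ 2 : ℝ) : ℂ) ^ (1 / 2 : ℂ)
  let X : ℂ := ((k : ℂ) ^ 2 + l1 * l2) / ((k : ℂ) ^ 2 - l1 * l2)
      * (Complex.exp (-l1 * δ) - Complex.exp (-l2 * δ))
  let E : ℂ := Complex.exp (-(δ : ℂ) * (l1 + l2))
  let s : ℂ := (X ^ 2 * (X ^ 2 + 4 * E)) ^ (1 / 2 : ℂ)
  max (‖X ^ 2 / 2 + E + s / 2‖) (‖X ^ 2 / 2 + E - s / 2‖)


lemma sq_cpow_half (z : ℂ) : (z ^ (1/2 : ℂ)) ^ 2 = z := by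
  rcases eq_or_ne z 0 with h | h
  · rw [h, Complex.zero_cpow (by norm_num : (1/2:ℂ) ≠ 0)]; ring
  · rw [sq, ← Complex.cpow_add _ _ h]; norm_num

lemma cpow_half_pos {x : ℝ} (hx : 0 ≤ x) : ((x:ℂ)) ^ (1/2:ℂ) = (Real.sqrt x : ℂ) := by
  rw [show ((1/2:ℂ)) = ((1/2:ℝ):ℂ) by norm_num, ← Complex.ofReal_cpow hx,
    ← Real.sqrt_eq_rpow]

lemma cpow_half_neg {x : ℝ} (hx : x < 0) :
    ((x:ℂ)) ^ (1/2:ℂ) = (Real.sqrt (-x) : ℂ) * Complex.I := by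
  rw [Complex.ofReal_cpow_of_nonpos hx.le]
  rw [show ((-(x:ℂ))) = ((-x : ℝ):ℂ) by push_cast; ring]
  rw [show ((1/2:ℂ)) = ((1/2:ℝ):ℂ) by norm_num, ← Complex.ofReal_cpow (by linarith)]
  rw [← Real.sqrt_eq_rpow]
  congr 1
  rw [show (↑Real.pi * I * ((1/2:ℝ):ℂ)) = (↑(Real.pi/2) * I) by push_cast; ring]
  simp [Complex.exp_mul_I]


noncomputable def XF (a b : ℝ) (c : ℂ) (δ : ℝ) : ℂ :=
  c * (Complex.exp (-(↑a * Complex.I) * ↑δ) - Complex.exp (-↑b * ↑δ))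
noncomputable def EF (a b : ℝ) (δ : ℝ) : ℂ :=
  Complex.exp (-↑δ * (↑a * Complex.I + ↑b))
noncomputable def SF (a b : ℝ) (c : ℂ) (δ : ℝ) : ℂ :=
  ((XF a b c δ) ^ 2 * ((XF a b c δ) ^ 2 + 4 * EF a b δ)) ^ (1/2 : ℂ)

lemma key_max (A B E : ℂ) (h : A^2 - B^2 = E^2) :
    (norm : ℂ → ℝ) E + Real.sqrt (2*((norm : ℂ → ℝ) A)^2 + 2*((norm : ℂ → ℝ) B)^2
      - 2*((norm : ℂ → ℝ) E)^2)/2 ≤ max ((norm : ℂ → ℝ) (A+B)) ((norm : ℂ → ℝ) (A-B)) := by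
  set p := (norm : ℂ → ℝ) (A+B) with hp
  set q := (norm : ℂ → ℝ) (A-B) with hq
  have hpq : p * q = ((norm : ℂ → ℝ) E)^2 := by
    rw [hp, hq, ← norm_mul, show (A+B)*(A-B) = E^2 by linear_combination h, norm_pow]
  have hsum : p^2 + q^2 = 2*((norm : ℂ → ℝ) A)^2 + 2*((norm : ℂ → ℝ) B)^2 := by
    simp only [hp, hq, Complex.sq_norm]
    rw [Complex.normSq_add, Complex.normSq_sub]; ring
  set M := max p q with hM
  set m := min p q with hm
  have hmm : m ≤ M := min_le_max
  have h0m : 0 ≤ m := le_min (norm_nonneg _) (norm_nonneg _)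
  have hMm : M * m = ((norm : ℂ → ℝ) E)^2 := by rw [hM, hm, max_mul_min]; exact hpq
  have hMs : M^2 + m^2 = p^2 + q^2 := by
    rcases max_cases p q with ⟨h1,h2⟩ | ⟨h1,h2⟩ <;> rcases min_cases p q with ⟨h3,h4⟩ | ⟨h3,h4⟩ <;>
      rw [hM, hm, h1, h3] <;> ring_nf <;> nlinarith
  have harg : 2*((norm : ℂ → ℝ) A)^2 + 2*((norm : ℂ → ℝ) B)^2 - 2*((norm : ℂ → ℝ) E)^2 = (M - m)^2 := by
    rw [← hsum, ← hMs]; nlinarith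
  have hE : (norm : ℂ → ℝ) E = Real.sqrt (M * m) := by
    rw [hMm, Real.sqrt_sq (norm_nonneg _)]
  rw [harg, hE, Real.sqrt_sq (by linarith)]
  have : Real.sqrt (M*m) ≤ (M+m)/2 := by
    rw [show (M+m)/2 = Real.sqrt (((M+m)/2)^2) by rw [Real.sqrt_sq (by linarith)]]
    exact Real.sqrt_le_sqrt (by nlinarith)
  linarith

lemma DF_ident (X E S : ℂ) (hS : S^2 = X^2*(X^2+4*E)) :
    2*((norm : ℂ → ℝ) (X^2/2 + E))^2 + 2*((norm : ℂ → ℝ) (S/2))^2 - 2*((norm : ℂ → ℝ) E)^2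
    = 2*((X^2) * (starRingEnd ℂ) E).re + ((norm : ℂ → ℝ) X)^4/2
      + ((norm : ℂ → ℝ) X)^2 * (norm : ℂ → ℝ) (X^2+4*E)/2 := by
  have h1 : ((norm : ℂ → ℝ) (S/2))^2 = ((norm : ℂ → ℝ) X)^2 * (norm : ℂ → ℝ) (X^2+4*E)/4 := by
    rw [← norm_pow, div_pow, hS]
    simp [map_mul, map_pow]
    ring
  have h2 : ((norm : ℂ → ℝ) (X^2/2 + E))^2
      = ((norm : ℂ → ℝ) X)^4/4 + ((norm : ℂ → ℝ) E)^2 + ((X^2) * (starRingEnd ℂ) E).re := by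
    rw [Complex.sq_norm, Complex.normSq_add]
    have : Complex.normSq (X^2/2) = ((norm : ℂ → ℝ) X)^4/4 := by
      rw [← Complex.sq_norm, norm_div, norm_pow]
      norm_num
      ring
    rw [this, Complex.sq_norm]
    have : (X^2/2 * (starRingEnd ℂ) E).re = ((X^2) * (starRingEnd ℂ) E).re / 2 := by
      rw [div_mul_eq_mul_div]
      rw [show (2:ℂ) = ((2:ℝ):ℂ) by norm_num, ← Complex.div_ofReal_re]
    rw [this]; ring
  rw [h1, h2]; ring

lemma div_sq_ident (δ : ℝ) (hδ : δ ≠ 0) (X E : ℂ) :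
    (2*((X)^2 * (starRingEnd ℂ) E).re + ((norm : ℂ → ℝ) X)^4/2
      + ((norm : ℂ → ℝ) X)^2 * (norm : ℂ → ℝ) (X^2+4*E)/2)/δ^2
    = 2*((X/(δ:ℂ))^2 * (starRingEnd ℂ) E).re + ((norm : ℂ → ℝ) (X/(δ:ℂ)))^4*δ^2/2
      + ((norm : ℂ → ℝ) (X/(δ:ℂ)))^2 * (norm : ℂ → ℝ) (X^2+4*E)/2 := by
  have ha : (norm : ℂ → ℝ) (X/(δ:ℂ)) = (norm : ℂ → ℝ) X / |δ| := by
    rw [norm_div, Complex.norm_real, Real.norm_eq_abs]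
  have hre : ((X/(δ:ℂ))^2 * (starRingEnd ℂ) E).re = ((X)^2 * (starRingEnd ℂ) E).re / δ^2 := by
    rw [div_pow, div_mul_eq_mul_div, show ((δ:ℂ))^2 = ((δ^2:ℝ):ℂ) by push_cast; ring,
      ← Complex.div_ofReal_re]
  rw [ha, hre]
  have h1 : |δ|^2 = δ^2 := sq_abs δ
  field_simp
  ring_nf
  rw [show |δ|^4 = (|δ|^2)^2 by ring, h1]
  ring

lemma aux_diverge (a b : ℝ) (ha : 0 < a) (hb : 0 < b) (c : ℂ)
    (hwre : b < (c * ((b:ℂ) - ↑a * Complex.I)).re) :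
    ∃ δ₀ > (0:ℝ), ∀ δ : ℝ, 0 < δ → δ < δ₀ →
      1 < max ((norm : ℂ → ℝ) ((XF a b c δ)^2/2 + EF a b δ + SF a b c δ/2))
              ((norm : ℂ → ℝ) ((XF a b c δ)^2/2 + EF a b δ - SF a b c δ/2)) := by
  set w : ℂ := c * ((b:ℂ) - ↑a * Complex.I) with hw
  -- basic values
  have hX0 : XF a b c 0 = 0 := by simp [XF]
  have hE0 : EF a b 0 = 1 := by simp [EF]
  have hEabs : ∀ δ : ℝ, (norm : ℂ → ℝ) (EF a b δ) = Real.exp (-b*δ) := by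
    intro δ
    rw [EF, Complex.norm_exp]
    congr 1
    simp [Complex.mul_re]
    ring
  have hSsq : ∀ δ : ℝ, (SF a b c δ)^2 = (XF a b c δ)^2*((XF a b c δ)^2+4*EF a b δ) :=
    fun δ => sq_cpow_half _
  -- the D function
  set D : ℝ → ℝ := fun δ => 2*((norm : ℂ → ℝ) ((XF a b c δ)^2/2 + EF a b δ))^2
      + 2*((norm : ℂ → ℝ) (SF a b c δ/2))^2 - 2*((norm : ℂ → ℝ) (EF a b δ))^2 with hD
  -- lower bound via key_max
  have hlow : ∀ δ : ℝ, Real.exp (-b*δ) + Real.sqrt (D δ)/2 ≤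
      max ((norm : ℂ → ℝ) ((XF a b c δ)^2/2 + EF a b δ + SF a b c δ/2))
          ((norm : ℂ → ℝ) ((XF a b c δ)^2/2 + EF a b δ - SF a b c δ/2)) := by
    intro δ
    have h := key_max ((XF a b c δ)^2/2 + EF a b δ) (SF a b c δ/2) (EF a b δ)
      (by linear_combination (-(1/4) : ℂ) * hSsq δ)
    rw [hEabs δ] at h
    simp only [hD]
    rw [hEabs δ]
    exact h
  -- derivative of XF at 0 and slope limit
  have hXd : HasDerivAt (fun δ : ℝ => XF a b c δ) w 0 := by
    have h1 : HasDerivAt (fun δ : ℝ => Complex.exp (-(↑a * Complex.I) * ↑δ))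
        (-(↑a * Complex.I)) 0 := by
      have := (((hasDerivAt_id (0:ℂ)).const_mul (-(↑a * Complex.I))).cexp).comp_ofReal (z := 0)
      simpa using this
    have h2 : HasDerivAt (fun δ : ℝ => Complex.exp (-(b:ℂ) * ↑δ)) (-(b:ℂ)) 0 := by
      have := (((hasDerivAt_id (0:ℂ)).const_mul (-(b:ℂ))).cexp).comp_ofReal (z := 0)
      simpa using this
    have h3 := ((h1.sub h2).const_mul c)
    have hww : w = c * (-(↑a * Complex.I) - -(b:ℂ)) := by rw [hw]; ring
    rw [hww]
    exact h3
  have hphi : Tendsto (fun δ : ℝ => XF a b c δ / (δ:ℂ)) (𝓝[>] 0) (𝓝 w) := by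
    have h := hasDerivAt_iff_tendsto_slope.mp hXd
    have h2 : Tendsto (slope (fun δ : ℝ => XF a b c δ) 0) (𝓝[>] 0) (𝓝 w) :=
      h.mono_left (nhdsWithin_mono 0 (by intro x hx; exact ne_of_gt hx))
    refine h2.congr' ?_
    filter_upwards [self_mem_nhdsWithin] with δ (hδ : 0 < δ)
    rw [slope_def_module]
    simp [hX0, Complex.real_smul]
    ring
  -- continuity limits
  have hEc : Tendsto (fun δ : ℝ => EF a b δ) (𝓝[>] 0) (𝓝 1) := by
    have : Continuous fun δ : ℝ => EF a b δ := by
      unfold EF; continuity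
    have h := this.continuousAt (x := 0)
    rw [ContinuousAt, hE0] at h
    exact h.mono_left nhdsWithin_le_nhds
  have hXc : Tendsto (fun δ : ℝ => XF a b c δ) (𝓝[>] 0) (𝓝 0) := by
    have : Continuous fun δ : ℝ => XF a b c δ := by
      unfold XF; continuity
    have h := this.continuousAt (x := 0)
    rw [ContinuousAt, hX0] at h
    exact h.mono_left nhdsWithin_le_nhds
  have hdel : Tendsto (fun δ : ℝ => δ) (𝓝[>] (0:ℝ)) (𝓝 0) :=
    tendsto_id.mono_left nhdsWithin_le_nhds
  -- limit of the G expression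
  have hG : Tendsto (fun δ : ℝ =>
      2*((XF a b c δ/(δ:ℂ))^2 * (starRingEnd ℂ) (EF a b δ)).re
        + ((norm : ℂ → ℝ) (XF a b c δ/(δ:ℂ)))^4*δ^2/2
        + ((norm : ℂ → ℝ) (XF a b c δ/(δ:ℂ)))^2 * (norm : ℂ → ℝ) ((XF a b c δ)^2+4*EF a b δ)/2)
      (𝓝[>] 0) (𝓝 (2*(w^2 * (starRingEnd ℂ) 1).re + ((norm : ℂ → ℝ) w)^4*0^2/2
        + ((norm : ℂ → ℝ) w)^2 * (norm : ℂ → ℝ) ((0:ℂ)^2+4*1)/2)) := by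
    have habs : Tendsto (fun δ : ℝ => (norm : ℂ → ℝ) (XF a b c δ/(δ:ℂ))) (𝓝[>] 0)
        (𝓝 ((norm : ℂ → ℝ) w)) := (continuous_norm.tendsto w).comp hphi
    have hconj : Tendsto (fun δ : ℝ => (starRingEnd ℂ) (EF a b δ)) (𝓝[>] 0)
        (𝓝 ((starRingEnd ℂ) 1)) := ((continuous_conj).tendsto 1).comp hEc
    have hre : Tendsto (fun δ : ℝ => ((XF a b c δ/(δ:ℂ))^2 * (starRingEnd ℂ) (EF a b δ)).re)
        (𝓝[>] 0) (𝓝 ((w^2 * (starRingEnd ℂ) 1).re)) :=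
      (Complex.continuous_re.tendsto _).comp ((hphi.pow 2).mul hconj)
    have habs2 : Tendsto (fun δ : ℝ => (norm : ℂ → ℝ) ((XF a b c δ)^2+4*EF a b δ)) (𝓝[>] 0)
        (𝓝 ((norm : ℂ → ℝ) ((0:ℂ)^2+4*1))) :=
      (continuous_norm.tendsto _).comp ((hXc.pow 2).add (hEc.const_mul 4))
    exact ((hre.const_mul 2).add (((habs.pow 4).mul (hdel.pow 2)).div_const 2)).add
      (((habs.pow 2).mul habs2).div_const 2)
  -- limit value simplification
  have hGval : (2*(w^2 * (starRingEnd ℂ) 1).re + ((norm : ℂ → ℝ) w)^4*0^2/2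
      + ((norm : ℂ → ℝ) w)^2 * (norm : ℂ → ℝ) ((0:ℂ)^2+4*1)/2) = 4*(w.re)^2 := by
    have h1 : (w^2 * (starRingEnd ℂ) 1).re = w.re^2 - w.im^2 := by
      simp [Complex.mul_re, sq]
    have h2 : ((norm : ℂ → ℝ) w)^2 = w.re^2 + w.im^2 := by
      rw [Complex.sq_norm, Complex.normSq_apply]; ring
    rw [h1, h2]
    norm_num
    ring
  have hG' : Tendsto (fun δ : ℝ =>
      2*((XF a b c δ/(δ:ℂ))^2 * (starRingEnd ℂ) (EF a b δ)).re
        + ((norm : ℂ → ℝ) (XF a b c δ/(δ:ℂ)))^4*δ^2/2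
        + ((norm : ℂ → ℝ) (XF a b c δ/(δ:ℂ)))^2 * (norm : ℂ → ℝ) ((XF a b c δ)^2+4*EF a b δ)/2)
      (𝓝[>] 0) (𝓝 (4*(w.re)^2)) := hGval ▸ hG
  -- real slope for exp
  have hRs : Tendsto (fun δ : ℝ => (1 - Real.exp (-b*δ)) / δ) (𝓝[>] 0) (𝓝 b) := by
    have h1 : HasDerivAt (fun δ : ℝ => Real.exp (-b*δ)) (-b) 0 := by
      have := ((hasDerivAt_id (0:ℝ)).const_mul (-b)).exp
      simpa using this
    have h2 : HasDerivAt (fun δ : ℝ => 1 - Real.exp (-b*δ)) b 0 := by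
      simpa using (h1.const_sub 1)
    have h := hasDerivAt_iff_tendsto_slope.mp h2
    have h3 : Tendsto (slope (fun δ : ℝ => 1 - Real.exp (-b*δ)) 0) (𝓝[>] 0) (𝓝 b) :=
      h.mono_left (nhdsWithin_mono 0 (by intro x hx; exact ne_of_gt hx))
    refine h3.congr' ?_
    filter_upwards [self_mem_nhdsWithin] with δ (hδ : 0 < δ)
    rw [slope_def_field]
    simp
  have hR2 : Tendsto (fun δ : ℝ => (2*((1 - Real.exp (-b*δ))/δ))^2) (𝓝[>] 0)
      (𝓝 ((2*b)^2)) := (hRs.const_mul 2).pow 2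
  have hpos : 0 < 4*(w.re)^2 - (2*b)^2 := by nlinarith
  have hQ : Tendsto (fun δ : ℝ => D δ/δ^2 - (2*((1 - Real.exp (-b*δ))/δ))^2) (𝓝[>] 0)
      (𝓝 (4*(w.re)^2 - (2*b)^2)) := by
    refine Tendsto.congr' ?_ (hG'.sub hR2)
    filter_upwards [self_mem_nhdsWithin] with δ (hδ : 0 < δ)
    have hDd : D δ = 2*((XF a b c δ)^2 * (starRingEnd ℂ) (EF a b δ)).re
        + ((norm : ℂ → ℝ) (XF a b c δ))^4/2
        + ((norm : ℂ → ℝ) (XF a b c δ))^2 * (norm : ℂ → ℝ) ((XF a b c δ)^2+4*EF a b δ)/2 := by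
      simp only [hD]
      exact DF_ident _ _ _ (hSsq δ)
    rw [hDd, div_sq_ident δ (ne_of_gt hδ)]
  have hev : ∀ᶠ δ in 𝓝[>] (0:ℝ), 0 < D δ/δ^2 - (2*((1 - Real.exp (-b*δ))/δ))^2 :=
    hQ.eventually (eventually_gt_nhds hpos)
  have hev2 : ∀ᶠ δ in 𝓝[>] (0:ℝ), (2*(1 - Real.exp (-b*δ)))^2 < D δ := by
    filter_upwards [hev, self_mem_nhdsWithin] with δ h1 (h2 : 0 < δ)
    have hδ2 : (0:ℝ) < δ^2 := by positivity
    have heq : (2*((1 - Real.exp (-b*δ))/δ))^2 = (2*(1 - Real.exp (-b*δ)))^2/δ^2 := by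
      field_simp
    rw [heq] at h1
    have h3 : (2*(1 - Real.exp (-b*δ)))^2/δ^2 < D δ/δ^2 := by linarith
    exact (div_lt_div_iff_of_pos_right hδ2).mp h3
  obtain ⟨u, hu, hsub⟩ := mem_nhdsGT_iff_exists_Ioo_subset.mp hev2
  refine ⟨u, hu, fun δ hδ hδu => ?_⟩
  have hmem : (2*(1 - Real.exp (-b*δ)))^2 < D δ := hsub ⟨hδ, hδu⟩
  have he1 : Real.exp (-b*δ) < 1 := by
    rw [Real.exp_lt_one_iff]
    nlinarith
  have hnn : (0:ℝ) ≤ 2*(1 - Real.exp (-b*δ)) := by linarith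
  have hsq : 2*(1 - Real.exp (-b*δ)) < Real.sqrt (D δ) := by
    rw [Real.lt_sqrt hnn]
    exact hmem
  have hl := hlow δ
  have hpos' : 0 < Real.exp (-b*δ) := Real.exp_pos _
  calc (1:ℝ) = Real.exp (-b*δ) + (1 - Real.exp (-b*δ)) := by ring
    _ < Real.exp (-b*δ) + Real.sqrt (D δ)/2 := by linarith
    _ ≤ _ := hl

/-- for intermediate Fourier frequencies `ω/Cp < k < ω/Cs` (under the
admissibility conditions `k² ± λ₁λ₂ ≠ 0`), the overlapping classical Schwarz method
diverges: `ρ_cla(k, ω, Cp, Cs, δ) > 1` for all sufficiently small overlaps `δ > 0`. -/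
theorem schwarz_intermediate_frequencies_diverge
    (μ lam ρ ω : ℝ) (hμ : 0 < μ) (hlam : 0 < lam) (hρ : 0 < ρ) (hω : 0 < ω)
    (Cp Cs : ℝ) (hCp : Cp = Real.sqrt ((lam + 2 * μ) / ρ)) (hCs : Cs = Real.sqrt (μ / ρ))
    (k : ℝ)
    (l1 l2 : ℂ)
    (hl1 : l1 = ((k ^ 2 - ω ^ 2 / Cs ^ 2 : ℝ) : ℂ) ^ (1 / 2 : ℂ))
    (hl2 : l2 = ((k ^ 2 - ω ^ 2 / Cp ^ 2 : ℝ) : ℂ) ^ (1 / 2 : ℂ))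
    (hk : ω / Cp < k ∧ k < ω / Cs)
    (hadmp : (k : ℂ) ^ 2 + l1 * l2 ≠ 0) (hadmm : (k : ℂ) ^ 2 - l1 * l2 ≠ 0) :
    ∃ δ₀ > (0 : ℝ), ∀ δ : ℝ, 0 < δ → δ < δ₀ → 1 < rhoCla Cp Cs ω k δ := by
  obtain ⟨hk1, hk2⟩ := hk
  have hCs0 : 0 < Cs := by
    rw [hCs]; exact Real.sqrt_pos.mpr (div_pos hμ hρ)
  have hCp0 : 0 < Cp := by
    rw [hCp]; exact Real.sqrt_pos.mpr (div_pos (by linarith) hρ)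
  have hk0 : 0 < k := lt_trans (div_pos hω hCp0) hk1
  have haa : k^2 - ω^2/Cs^2 < 0 := by
    have h1 : k^2 < (ω/Cs)^2 := by
      have := mul_self_lt_mul_self hk0.le hk2
      simpa [sq] using this
    have h2 : (ω/Cs)^2 = ω^2/Cs^2 := by rw [div_pow]
    linarith [h2 ▸ h1]
  have hbb : 0 < k^2 - ω^2/Cp^2 := by
    have h1 : (ω/Cp)^2 < k^2 := by
      have := mul_self_lt_mul_self (le_of_lt (div_pos hω hCp0)) hk1
      simpa [sq] using this
    have h2 : (ω/Cp)^2 = ω^2/Cp^2 := by rw [div_pow]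
    linarith [h2 ▸ h1]
  set a : ℝ := Real.sqrt (ω^2/Cs^2 - k^2) with hadef
  set b : ℝ := Real.sqrt (k^2 - ω^2/Cp^2) with hbdef
  have ha : 0 < a := Real.sqrt_pos.mpr (by linarith)
  have hb : 0 < b := Real.sqrt_pos.mpr hbb
  have hb2 : b^2 = k^2 - ω^2/Cp^2 := Real.sq_sqrt hbb.le
  have hbk : b^2 < k^2 := by
    have : 0 < ω^2/Cp^2 := div_pos (by positivity) (by positivity)
    linarith
  have hl1' : ((k ^ 2 - ω ^ 2 / Cs ^ 2 : ℝ) : ℂ) ^ (1 / 2 : ℂ) = (a:ℂ) * Complex.I := by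
    rw [cpow_half_neg haa, show -(k^2 - ω^2/Cs^2) = ω^2/Cs^2 - k^2 by ring]
  have hl2' : ((k ^ 2 - ω ^ 2 / Cp ^ 2 : ℝ) : ℂ) ^ (1 / 2 : ℂ) = (b:ℂ) := by
    rw [cpow_half_pos (by linarith)]
  set c : ℂ := ((k:ℂ)^2 + (a:ℂ)*Complex.I*(b:ℂ))/((k:ℂ)^2 - (a:ℂ)*Complex.I*(b:ℂ)) with hcdef
  have hwre : b < (c * ((b:ℂ) - (a:ℂ)*Complex.I)).re := by
    rw [hcdef]
    have hden : (0:ℝ) < k^4 + a^2*b^2 := by positivity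
    have h1 : (((k:ℂ)^2 + (a:ℂ)*Complex.I*(b:ℂ))/((k:ℂ)^2 - (a:ℂ)*Complex.I*(b:ℂ))) * ((b:ℂ) - (a:ℂ)*Complex.I)
        = (((k:ℂ)^2 + (a:ℂ)*Complex.I*(b:ℂ)) * ((b:ℂ) - (a:ℂ)*Complex.I))/((k:ℂ)^2 - (a:ℂ)*Complex.I*(b:ℂ)) := by
      ring
    rw [h1, Complex.div_re]
    have hre1 : (((k:ℂ)^2 + (a:ℂ)*Complex.I*(b:ℂ)) * ((b:ℂ) - (a:ℂ)*Complex.I)).re = b*k^2 + a^2*b := by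
      simp [Complex.mul_re, Complex.mul_im, ← Complex.ofReal_pow]
      ring
    have him1 : (((k:ℂ)^2 + (a:ℂ)*Complex.I*(b:ℂ)) * ((b:ℂ) - (a:ℂ)*Complex.I)).im = a*b^2 - a*k^2 := by
      simp [Complex.mul_re, Complex.mul_im, ← Complex.ofReal_pow]
      ring
    have hre2 : ((k:ℂ)^2 - (a:ℂ)*Complex.I*(b:ℂ)).re = k^2 := by simp [← Complex.ofReal_pow]
    have him2 : ((k:ℂ)^2 - (a:ℂ)*Complex.I*(b:ℂ)).im = -(a*b) := by simp [← Complex.ofReal_pow]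
    have hns : Complex.normSq ((k:ℂ)^2 - (a:ℂ)*Complex.I*(b:ℂ)) = k^4 + a^2*b^2 := by
      rw [Complex.normSq_apply, hre2, him2]; ring
    rw [hre1, him1, hre2, him2, hns]
    rw [← add_div, lt_div_iff₀ hden]
    nlinarith [mul_pos (mul_pos (mul_pos ha ha) hb) (sub_pos.mpr hbk)]
  obtain ⟨δ₀, hδ₀, H⟩ := aux_diverge a b ha hb c hwre
  refine ⟨δ₀, hδ₀, fun δ hδ1 hδ2 => ?_⟩
  have hmax := H δ hδ1 hδ2
  have hrw : rhoCla Cp Cs ω k δ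
      = max ((norm : ℂ → ℝ) ((XF a b c δ)^2/2 + EF a b δ + SF a b c δ/2))
            ((norm : ℂ → ℝ) ((XF a b c δ)^2/2 + EF a b δ - SF a b c δ/2)) := by
    simp only [rhoCla, XF, EF, SF, hl1', hl2', hcdef]
  rw [hrw]
  exact hmax
end

section
/- For every Fourier frequency k with k > ω/Cs, there exists δ₀ > 0 such that for all overlaps δ with 0 < δ < δ₀, the convergence factor of the classical Schwarz method satisfies ρ_cla(k, ω, Cp, Cs, δ) < 1; i.e., the overlapping classical Schwarz method applied to the time-harmonic Navier equations converges on the high (evanescent) frequencies. -/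
set_option maxHeartbeats 1000000


open Complex

/-- Core real inequality: if `0 ≤ X < 1 - E` and `0 < E < 1` then both roots have
absolute value less than one. -/
lemma core_ineq (X E : ℝ) (hX : 0 ≤ X) (hE0 : 0 < E) (hE1 : E < 1) (h : X < 1 - E) :
    |X ^ 2 / 2 + E + Real.sqrt (X ^ 2 * (X ^ 2 + 4 * E)) / 2| < 1 ∧
    |X ^ 2 / 2 + E - Real.sqrt (X ^ 2 * (X ^ 2 + 4 * E)) / 2| < 1 := by
  set s := Real.sqrt (X ^ 2 * (X ^ 2 + 4 * E)) with hs
  have hs0 : 0 ≤ s := Real.sqrt_nonneg _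
  have hs2 : s ^ 2 = X ^ 2 * (X ^ 2 + 4 * E) := by
    rw [hs, Real.sq_sqrt]; nlinarith
  have hX2 : X ^ 2 < (1 - E) ^ 2 := by nlinarith
  have hRpos : 0 < 2 - X ^ 2 - 2 * E := by nlinarith
  have hslt : s < 2 - X ^ 2 - 2 * E := by
    rw [hs]
    rw [Real.sqrt_lt' hRpos]
    nlinarith
  have hplus : X ^ 2 / 2 + E + s / 2 < 1 := by linarith
  have hpluspos : 0 < X ^ 2 / 2 + E + s / 2 := by nlinarith
  have hprod : (X ^ 2 / 2 + E + s / 2) * (X ^ 2 / 2 + E - s / 2) = E ^ 2 := by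
    nlinarith [hs2]
  have hminuspos : 0 < X ^ 2 / 2 + E - s / 2 := by
    rcases lt_trichotomy (0 : ℝ) (X ^ 2 / 2 + E - s / 2) with h' | h' | h'
    · exact h'
    · nlinarith
    · nlinarith
  constructor
  · rw [abs_of_pos hpluspos]; exact hplus
  · rw [abs_of_pos hminuspos]; nlinarith

/-- For small positive `δ`, `c (e^{-aδ} - e^{-bδ}) < 1 - e^{-(a+b)δ}` given
`c (b - a) < a + b`. -/
lemma key_small (a b c : ℝ) (hc : c * (b - a) < a + b) :
    ∃ δ₀ > (0 : ℝ), ∀ δ : ℝ, 0 < δ → δ < δ₀ →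
      c * (Real.exp (-a * δ) - Real.exp (-b * δ)) < 1 - Real.exp (-(a + b) * δ) := by
  set g : ℝ → ℝ := fun δ =>
    (1 - Real.exp (-(a + b) * δ)) - c * (Real.exp (-a * δ) - Real.exp (-b * δ)) with hg
  have hda : HasDerivAt (fun δ : ℝ => Real.exp (-a * δ)) (-a * Real.exp (-a * 0)) 0 := by
    simpa using ((hasDerivAt_id (0:ℝ)).const_mul (-a)).exp
  have hdb : HasDerivAt (fun δ : ℝ => Real.exp (-b * δ)) (-b * Real.exp (-b * 0)) 0 := by
    simpa using ((hasDerivAt_id (0:ℝ)).const_mul (-b)).exp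
  have hdab : HasDerivAt (fun δ : ℝ => Real.exp (-(a + b) * δ))
      (-(a + b) * Real.exp (-(a + b) * 0)) 0 := by
    simpa using ((hasDerivAt_id (0:ℝ)).const_mul (-(a + b))).exp
  have hd : HasDerivAt g ((a + b) - c * (-a - -b)) 0 := by
    have h1 := ((hasDerivAt_const (0:ℝ) (1:ℝ)).sub hdab).sub ((hda.sub hdb).const_mul c)
    simpa [hg, mul_comm, Pi.sub_def] using h1
  have hD : 0 < (a + b) - c * (-a - -b) := by nlinarith
  have hslope := hasDerivAt_iff_tendsto_slope.mp hd
  have hev : ∀ᶠ δ in nhdsWithin (0:ℝ) {(0:ℝ)}ᶜ, 0 < slope g 0 δ :=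
    hslope.eventually (eventually_gt_nhds hD)
  have hev' : ∀ᶠ δ in nhdsWithin (0:ℝ) (Set.Ioi 0), 0 < slope g 0 δ :=
    hev.filter_mono (nhdsWithin_mono _ (fun x hx => ne_of_gt hx))
  rw [Filter.eventually_iff, mem_nhdsGT_iff_exists_Ioo_subset] at hev'
  obtain ⟨u, hu, hsub⟩ := hev'
  refine ⟨u, hu, fun δ hδ0 hδu => ?_⟩
  have hmem := hsub ⟨hδ0, hδu⟩
  have hg0 : g 0 = 0 := by simp [hg]
  have hgd : 0 < δ⁻¹ * (g δ - g 0) := by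
    simpa [slope_def_field, div_eq_inv_mul] using hmem
  rw [hg0, sub_zero] at hgd
  have hgpos : 0 < g δ := by
    have h2 := mul_pos hδ0 hgd
    rwa [mul_inv_cancel_left₀ (ne_of_gt hδ0)] at h2
  simp only [hg] at hgpos
  linarith

/-- for high (evanescent) Fourier frequencies `k > ω/Cs`, the overlapping
classical Schwarz method converges: `ρ_cla(k, ω, Cp, Cs, δ) < 1` for all sufficiently
small overlaps `δ > 0`. -/
theorem schwarz_high_frequencies_converge
    (μ lam ρ ω : ℝ) (hμ : 0 < μ) (hlam : 0 < lam) (hρ : 0 < ρ) (hω : 0 < ω)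
    (Cp Cs : ℝ) (hCp : Cp = Real.sqrt ((lam + 2 * μ) / ρ)) (hCs : Cs = Real.sqrt (μ / ρ))
    (k : ℝ) (hk : ω / Cs < k) :
    ∃ δ₀ > (0 : ℝ), ∀ δ : ℝ, 0 < δ → δ < δ₀ → rhoCla Cp Cs ω k δ < 1 := by
  have hCs0 : 0 < Cs := by rw [hCs]; positivity
  have hCp0 : 0 < Cp := by rw [hCp]; positivity
  have hCsCp : Cs < Cp := by
    rw [hCs, hCp]
    exact Real.sqrt_lt_sqrt (by positivity) ((div_lt_div_iff_of_pos_right hρ).mpr (by linarith))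
  have hk0 : 0 < k := lt_trans (by positivity) hk
  have hA : 0 < k ^ 2 - ω ^ 2 / Cs ^ 2 := by
    have h1 : ω / Cs < k := hk
    have h2 : (ω / Cs) ^ 2 < k ^ 2 := by
      apply pow_lt_pow_left₀ h1 (by positivity)
      norm_num
    rw [div_pow] at h2
    linarith
  have hBA : ω ^ 2 / Cp ^ 2 < ω ^ 2 / Cs ^ 2 := by
    apply div_lt_div_of_pos_left (by positivity) (by positivity)
    nlinarith
  have hB : 0 < k ^ 2 - ω ^ 2 / Cp ^ 2 := by linarith
  set A := k ^ 2 - ω ^ 2 / Cs ^ 2 with hAdef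
  set B := k ^ 2 - ω ^ 2 / Cp ^ 2 with hBdef
  have hAB : A < B := by rw [hAdef, hBdef]; linarith
  have hBk : B < k ^ 2 := by rw [hBdef]; nlinarith [sq_nonneg (ω / Cp), div_pos (by positivity : (0:ℝ) < ω ^ 2) (by positivity : (0:ℝ) < Cp ^ 2)]
  set a := Real.sqrt A with hadef
  set b := Real.sqrt B with hbdef
  have ha0 : 0 < a := Real.sqrt_pos.mpr hA
  have hb0 : 0 < b := Real.sqrt_pos.mpr (by linarith)
  have hab : a < b := Real.sqrt_lt_sqrt hA.le hAB
  have ha2 : a ^ 2 = A := Real.sq_sqrt hA.le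
  have hb2 : b ^ 2 = B := Real.sq_sqrt (by linarith)
  have habk : a * b < k ^ 2 := by nlinarith
  set c := (k ^ 2 + a * b) / (k ^ 2 - a * b) with hcdef
  have hden : 0 < k ^ 2 - a * b := by linarith
  have hc0 : 0 < c := by positivity
  have hcineq : c * (b - a) < a + b := by
    rw [hcdef, div_mul_eq_mul_div, div_lt_iff₀ hden]
    nlinarith
  obtain ⟨δ₀, hδ₀, hkey⟩ := key_small a b c hcineq
  refine ⟨δ₀, hδ₀, fun δ hδ0 hδu => ?_⟩
  -- real quantities
  set Xr : ℝ := c * (Real.exp (-a * δ) - Real.exp (-b * δ)) with hXr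
  set Er : ℝ := Real.exp (-(a + b) * δ) with hEr
  have hXr0 : 0 ≤ Xr := by
    have : Real.exp (-b * δ) ≤ Real.exp (-a * δ) := by
      apply Real.exp_le_exp.mpr
      rw [neg_mul, neg_mul, neg_le_neg_iff]
      exact mul_le_mul_of_nonneg_right hab.le hδ0.le
    have h' : 0 ≤ Real.exp (-a * δ) - Real.exp (-b * δ) := by linarith
    exact mul_nonneg hc0.le h'
  have hEr0 : 0 < Er := Real.exp_pos _
  have hEr1 : Er < 1 := by
    apply Real.exp_lt_one_iff.mpr
    have h' : 0 < (a + b) * δ := mul_pos (by linarith) hδ0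
    linarith
  have hXlt : Xr < 1 - Er := by
    have := hkey δ hδ0 hδu
    rw [hXr, hEr]; linarith
  obtain ⟨hp, hm⟩ := core_ineq Xr Er hXr0 hEr0 hEr1 hXlt
  -- identify the complex quantities with the real ones
  have hl1 : ((k ^ 2 - ω ^ 2 / Cs ^ 2 : ℝ) : ℂ) ^ (1 / 2 : ℂ) = (a : ℂ) := by
    rw [show ((1 / 2 : ℂ)) = ((1 / 2 : ℝ) : ℂ) by norm_num,
      ← Complex.ofReal_cpow hA.le, ← Real.sqrt_eq_rpow]
  have hl2 : ((k ^ 2 - ω ^ 2 / Cp ^ 2 : ℝ) : ℂ) ^ (1 / 2 : ℂ) = (b : ℂ) := by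
    rw [show ((1 / 2 : ℂ)) = ((1 / 2 : ℝ) : ℂ) by norm_num,
      ← Complex.ofReal_cpow hB.le, ← Real.sqrt_eq_rpow]
  rw [rhoCla]
  simp only [hl1, hl2]
  have hXc : ((k : ℂ) ^ 2 + (a : ℂ) * (b : ℂ)) / ((k : ℂ) ^ 2 - (a : ℂ) * (b : ℂ))
      * (Complex.exp (-(a : ℂ) * δ) - Complex.exp (-(b : ℂ) * δ)) = (Xr : ℂ) := by
    rw [hXr, hcdef]
    push_cast [Complex.ofReal_exp]
    ring
  have hEc : Complex.exp (-(δ : ℂ) * ((a : ℂ) + (b : ℂ))) = (Er : ℂ) := by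
    rw [hEr]
    push_cast [Complex.ofReal_exp]
    ring_nf
  rw [hXc, hEc]
  have hsarg : (0 : ℝ) ≤ Xr ^ 2 * (Xr ^ 2 + 4 * Er) := by positivity
  have hsc : ((Xr : ℂ) ^ 2 * ((Xr : ℂ) ^ 2 + 4 * (Er : ℂ))) ^ (1 / 2 : ℂ)
      = ((Real.sqrt (Xr ^ 2 * (Xr ^ 2 + 4 * Er)) : ℝ) : ℂ) := by
    rw [show ((Xr : ℂ) ^ 2 * ((Xr : ℂ) ^ 2 + 4 * (Er : ℂ)))
        = ((Xr ^ 2 * (Xr ^ 2 + 4 * Er) : ℝ) : ℂ) by push_cast; ring,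
      show ((1 / 2 : ℂ)) = ((1 / 2 : ℝ) : ℂ) by norm_num,
      ← Complex.ofReal_cpow hsarg, ← Real.sqrt_eq_rpow]
  rw [hsc]
  set sr := Real.sqrt (Xr ^ 2 * (Xr ^ 2 + 4 * Er)) with hsr
  have h1 : (Xr : ℂ) ^ 2 / 2 + (Er : ℂ) + (sr : ℂ) / 2
      = ((Xr ^ 2 / 2 + Er + sr / 2 : ℝ) : ℂ) := by push_cast; ring
  have h2 : (Xr : ℂ) ^ 2 / 2 + (Er : ℂ) - (sr : ℂ) / 2
      = ((Xr ^ 2 / 2 + Er - sr / 2 : ℝ) : ℂ) := by push_cast; ring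
  rw [h1, h2, Complex.norm_real, Complex.norm_real, Real.norm_eq_abs, Real.norm_eq_abs]
  exact max_lt hp hm
end
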